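/- Let n be a natural number and let A be a subring of the product ring ∏_{i : Fin n} ℤ. Then the inclusion A ↪ ∏_{i : Fin n} ℤ is an integral ring extension; that is, every element of ∏_{i : Fin n} ℤ is integral over A. -/
import Mathlib

/-- Any subring `A` of a finite product `∏_{i : Fin n} ℤ` of copies of `ℤ` is
integrally embedded: every element of the product ring is integral over `A`. -/
theorem stmt4 (n : ℕ) (A : Subring (Fin n → ℤ)) (x : Fin n → ℤ) :
    IsIntegral A x := by
  have h : IsIntegral ℤ x := Algebra.IsIntegral.isIntegral x
  exact h.tower_top
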